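/- (Gill–Massar bound) Let ρ_θ be a d-dimensional parameterized density matrix with invertible quantum Fisher information matrix J, and let M = {M_x} be any POVM with classical Fisher information matrix I(M)_{ij} = Σ_{x: Tr(ρ_θ M_x)>0} ∂_i Tr(ρ_θ M_x) ∂_j Tr(ρ_θ M_x) / Tr(ρ_θ M_x). Then Tr(J^{-1} I(M)) ≤ d − 1. -/

import Mathlib

open Matrix ComplexOrder

section sqrtPort
open scoped MatrixOrder

noncomputable def Matrix.PosSemidef.sqrt {n : ℕ} {A : Matrix (Fin n) (Fin n) ℂ}
    (_hA : A.PosSemidef) : Matrix (Fin n) (Fin n) ℂ := CFC.sqrt A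

lemma Matrix.PosSemidef.posSemidef_sqrt {n : ℕ} {A : Matrix (Fin n) (Fin n) ℂ}
    (hA : A.PosSemidef) : hA.sqrt.PosSemidef := (CFC.sqrt_nonneg A).posSemidef

lemma Matrix.PosSemidef.sqrt_mul_self {n : ℕ} {A : Matrix (Fin n) (Fin n) ℂ}
    (hA : A.PosSemidef) : hA.sqrt * hA.sqrt = A := CFC.sqrt_mul_sqrt_self A hA.nonneg
end sqrtPort

section helpers
variable {n : ℕ}

lemma psd_trace_re_nonneg {A : Matrix (Fin n) (Fin n) ℂ} (hA : A.PosSemidef) :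
    0 ≤ A.trace.re := by
  have h : ∀ i, 0 ≤ (A i i).re := by
    intro i
    have := hA.dotProduct_mulVec_nonneg (Pi.single i 1)
    simp [dotProduct, mulVec, Pi.single_apply, Finset.sum_ite_eq] at this
    exact (Complex.nonneg_iff.mp this).1
  simpa [Matrix.trace, Complex.re_sum] using Finset.sum_nonneg fun i _ => h i

lemma psd_quad_le {A : Matrix (Fin n) (Fin n) ℂ} (hA : A.PosSemidef) (x : Fin n → ℂ) :
    (dotProduct (star x) (A *ᵥ x)).re ≤ A.trace.re * ∑ j, Complex.normSq (x j) := by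
  have hCh : (hA.sqrt).IsHermitian := hA.posSemidef_sqrt.1
  have hAC : A = hA.sqrtᴴ * hA.sqrt := by rw [hCh.eq, hA.sqrt_mul_self]
  have hq : (dotProduct (star x) (A *ᵥ x)).re = ∑ i, Complex.normSq ((hA.sqrt *ᵥ x) i) := by
    conv_lhs => rw [hAC]
    rw [← Matrix.mulVec_mulVec, Matrix.dotProduct_mulVec, ← Matrix.star_mulVec]
    simp [dotProduct, ← Complex.normSq_eq_conj_mul_self, Complex.re_sum]
  have htr : A.trace.re = ∑ i, ∑ j, Complex.normSq (hA.sqrt i j) := by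
    conv_lhs => rw [hAC]
    rw [Matrix.trace, Complex.re_sum, Finset.sum_comm]
    apply Finset.sum_congr rfl; intro i _
    rw [Matrix.diag_apply]
    simp only [Matrix.mul_apply, Matrix.conjTranspose_apply, Complex.re_sum]
    apply Finset.sum_congr rfl; intro j _
    simp [Complex.star_def, ← Complex.normSq_eq_conj_mul_self]
  rw [hq, htr, Finset.sum_mul]
  apply Finset.sum_le_sum
  intro i _
  have h1 : ‖(hA.sqrt *ᵥ x) i‖ ≤ ∑ j, ‖hA.sqrt i j‖ * ‖x j‖ := by
    simpa [mulVec, dotProduct] using (norm_sum_le Finset.univ (fun j => hA.sqrt i j * x j))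
  have h2 : (∑ j, ‖hA.sqrt i j‖ * ‖x j‖)^2 ≤
      (∑ j, ‖hA.sqrt i j‖^2) * ∑ j, ‖x j‖^2 :=
    Finset.sum_mul_sq_le_sq_mul_sq _ _ _
  calc Complex.normSq ((hA.sqrt *ᵥ x) i) = ‖(hA.sqrt *ᵥ x) i‖^2 :=
        (Complex.sq_norm _).symm
    _ ≤ (∑ j, ‖hA.sqrt i j‖ * ‖x j‖)^2 :=
        pow_le_pow_left₀ (norm_nonneg _) h1 2
    _ ≤ (∑ j, ‖hA.sqrt i j‖^2) * ∑ j, ‖x j‖^2 := h2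
    _ = (∑ j, Complex.normSq (hA.sqrt i j)) * ∑ j, Complex.normSq (x j) := by
        simp [Complex.sq_norm]

lemma trace_conj_sqrt {A B : Matrix (Fin n) (Fin n) ℂ}
    (hB : B.PosSemidef) : (A * B).trace = (hB.sqrtᴴ * A * hB.sqrt).trace := by
  rw [hB.posSemidef_sqrt.1.eq]
  calc (A * B).trace = (A * (hB.sqrt * hB.sqrt)).trace := by rw [hB.sqrt_mul_self]
    _ = ((A * hB.sqrt) * hB.sqrt).trace := by rw [Matrix.mul_assoc]
    _ = (hB.sqrt * (A * hB.sqrt)).trace := by rw [Matrix.trace_mul_comm]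
    _ = (hB.sqrt * A * hB.sqrt).trace := by rw [Matrix.mul_assoc]

lemma psd_trace_mul_nonneg {A B : Matrix (Fin n) (Fin n) ℂ}
    (hA : A.PosSemidef) (hB : B.PosSemidef) : 0 ≤ (A * B).trace.re := by
  rw [trace_conj_sqrt hB]
  exact psd_trace_re_nonneg (hA.conjTranspose_mul_mul_same _)

lemma psd_trace_mul_le {A B : Matrix (Fin n) (Fin n) ℂ}
    (hA : A.PosSemidef) (hB : B.PosSemidef) :
    (A * B).trace.re ≤ A.trace.re * B.trace.re := by
  have hCh : (hB.sqrt).IsHermitian := hB.posSemidef_sqrt.1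
  have hBtr : B.trace.re = ∑ i, ∑ j, Complex.normSq (hB.sqrt j i) := by
    conv_lhs => rw [← hB.sqrt_mul_self]
    rw [Matrix.trace, Complex.re_sum]
    apply Finset.sum_congr rfl
    intro i _
    rw [Matrix.diag_apply, Matrix.mul_apply, Complex.re_sum]
    apply Finset.sum_congr rfl
    intro j _
    have h : hB.sqrt i j = star (hB.sqrt j i) := by
      rw [← Matrix.conjTranspose_apply, hCh.eq]
    rw [h]
    simp [Complex.star_def, ← Complex.normSq_eq_conj_mul_self]
  have hdiag : ∀ i, ((hB.sqrtᴴ * A * hB.sqrt) i i).re ≤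
      A.trace.re * ∑ j, Complex.normSq (hB.sqrt j i) := by
    intro i
    have he : (hB.sqrtᴴ * A * hB.sqrt) i i
        = dotProduct (star (fun j => hB.sqrt j i)) (A *ᵥ (fun j => hB.sqrt j i)) := by
      simp only [Matrix.mul_apply, dotProduct, mulVec, Matrix.conjTranspose_apply,
        Finset.sum_mul, Pi.star_apply]
      rw [Finset.sum_comm]
      apply Finset.sum_congr rfl; intro j _
      rw [Finset.mul_sum]
      apply Finset.sum_congr rfl; intro k _
      ring
    rw [he]; exact psd_quad_le hA _
  rw [trace_conj_sqrt hB, hBtr]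
  have h2 : (hB.sqrtᴴ * A * hB.sqrt).trace.re = ∑ i, ((hB.sqrtᴴ * A * hB.sqrt) i i).re := by
    rw [Matrix.trace, Complex.re_sum]; rfl
  rw [h2, Finset.mul_sum]
  exact Finset.sum_le_sum fun i _ => hdiag i

/-- symmetry of the real part of `Tr(AρB)` for Hermitian matrices. -/
lemma herm_trace_sym {ρ A B : Matrix (Fin n) (Fin n) ℂ} (hρ : ρ.IsHermitian)
    (hA : A.IsHermitian) (hB : B.IsHermitian) :
    (A * ρ * B).trace.re = (B * ρ * A).trace.re := by
  have h : (B * ρ * A).trace = star (A * ρ * B).trace := by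
    rw [← Matrix.trace_conjTranspose]
    congr 1
    rw [Matrix.conjTranspose_mul, Matrix.conjTranspose_mul, hA.eq, hB.eq, hρ.eq,
      Matrix.mul_assoc]
  rw [h, Complex.star_def, Complex.conj_re]
end helpers

theorem stmt8 {d m : ℕ} {ι : Type*} [Fintype ι]
    (ρ : Matrix (Fin d) (Fin d) ℂ) (hρ : ρ.PosSemidef) (hρtr : ρ.trace = 1)
    (dρ : Fin m → Matrix (Fin d) (Fin d) ℂ)
    (hherm : ∀ i, (dρ i).IsHermitian) (hdtr : ∀ i, (dρ i).trace = 0)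
    (L : Fin m → Matrix (Fin d) (Fin d) ℂ)
    (hLh : ∀ i, (L i).IsHermitian)
    (hSLD : ∀ i, dρ i = (2:ℂ)⁻¹ • (L i * ρ + ρ * L i))
    (J : Matrix (Fin m) (Fin m) ℝ)
    (hJ : ∀ i j, J i j = ((2:ℂ)⁻¹ • (ρ * (L i * L j + L j * L i))).trace.re)
    (hJu : IsUnit J.det)
    (M : ι → Matrix (Fin d) (Fin d) ℂ)
    (hM : ∀ x, (M x).PosSemidef) (hMsum : ∑ x, M x = 1)
    (I : Matrix (Fin m) (Fin m) ℝ)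
    (hI : ∀ i j, I i j = ∑ x, if 0 < (ρ * M x).trace.re then
        (dρ i * M x).trace.re * (dρ j * M x).trace.re / (ρ * M x).trace.re
      else 0) :
    (J⁻¹ * I).trace ≤ (d : ℝ) - 1 := by
  set p : ι → ℝ := fun x => (ρ * M x).trace.re with hp
  set a : ι → Fin m → ℝ := fun x i => (dρ i * M x).trace.re with ha
  set c : ι → Fin m → ℝ := fun x => J⁻¹ *ᵥ a x with hc
  -- traces of ρ L i vanish
  have hLtr : ∀ i, (ρ * L i).trace = 0 := by
    intro i
    have h0 := hdtr i
    rw [hSLD i, Matrix.trace_smul, Matrix.trace_add, Matrix.trace_mul_comm (L i) ρ] at h0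
    have : (2:ℂ)⁻¹ • ((ρ * L i).trace + (ρ * L i).trace) = (ρ * L i).trace := by
      rw [smul_eq_mul]; ring
    rw [this] at h0
    exact h0
  -- a x i = Re Tr(M x * ρ * L i) = Re Tr(L i * ρ * M x)
  have haL : ∀ x i, (M x * ρ * L i).trace.re = a x i := by
    intro x i
    have hsym := herm_trace_sym hρ.1 (hM x).1 (hLh i)
    have : (dρ i * M x).trace = (2:ℂ)⁻¹ * ((L i * ρ * M x).trace + (M x * ρ * L i).trace) := by
      rw [hSLD i, Matrix.smul_mul, Matrix.trace_smul, smul_eq_mul, Matrix.add_mul,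
        Matrix.trace_add]
      congr 2
      rw [Matrix.trace_mul_comm, ← Matrix.mul_assoc]
    have h2 : a x i = ((2:ℂ)⁻¹ * ((L i * ρ * M x).trace + (M x * ρ * L i).trace)).re := by
      rw [ha]; dsimp only; rw [this]
    rw [h2, show ((2:ℂ)⁻¹ : ℂ) = (((2:ℝ)⁻¹ : ℝ) : ℂ) by norm_num, Complex.re_ofReal_mul,
      Complex.add_re, hsym]
    ring
  have haL' : ∀ x i, (L i * ρ * M x).trace.re = a x i := by
    intro x i
    rw [herm_trace_sym hρ.1 (hLh i) (hM x).1, haL]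
  -- J entries
  have hJ' : ∀ i j, (L i * ρ * L j).trace.re = J i j := by
    intro i j
    have hsym := herm_trace_sym hρ.1 (hLh i) (hLh j)
    have he : ((2:ℂ)⁻¹ • (ρ * (L i * L j + L j * L i))).trace
        = (2:ℂ)⁻¹ * ((L j * ρ * L i).trace + (L i * ρ * L j).trace) := by
      rw [Matrix.trace_smul, smul_eq_mul, Matrix.mul_add, Matrix.trace_add]
      congr 2
      · rw [← Matrix.mul_assoc, Matrix.trace_mul_comm, ← Matrix.mul_assoc]
      · rw [← Matrix.mul_assoc, Matrix.trace_mul_comm, ← Matrix.mul_assoc]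
    rw [hJ i j, he, show ((2:ℂ)⁻¹ : ℂ) = (((2:ℝ)⁻¹ : ℝ) : ℂ) by norm_num,
      Complex.re_ofReal_mul, Complex.add_re, hsym]
    ring
  -- rewrite the trace as a sum over outcomes
  have htrace : (J⁻¹ * I).trace = ∑ x, (if 0 < p x then dotProduct (a x) (c x) / p x else 0) := by
    rw [Matrix.trace]
    simp only [Matrix.diag_apply, Matrix.mul_apply, hI]
    simp only [Finset.mul_sum]
    have swap : ∀ (g : Fin m → Fin m → ι → ℝ),
        (∑ i, ∑ j, ∑ x, g i j x) = ∑ x, ∑ i, ∑ j, g i j x := by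
      intro g
      calc (∑ i, ∑ j, ∑ x, g i j x) = ∑ i, ∑ x, ∑ j, g i j x :=
            Finset.sum_congr rfl (fun i _ => Finset.sum_comm)
        _ = ∑ x, ∑ i, ∑ j, g i j x := Finset.sum_comm
    rw [swap]
    apply Finset.sum_congr rfl
    intro x _
    by_cases hx : 0 < p x
    · simp only [hp] at hx
      simp only [if_pos hx, if_pos (show 0 < p x from hx)]
      rw [dotProduct, Finset.sum_div]
      apply Finset.sum_congr rfl
      intro i _
      rw [hc]; dsimp only [Matrix.mulVec, dotProduct]
      rw [Finset.mul_sum, Finset.sum_div]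
      apply Finset.sum_congr rfl
      intro j _
      rw [ha, hp]; dsimp only
      ring
    · simp only [hp] at hx
      simp [if_neg hx, if_neg (show ¬ 0 < p x from hx)]
  -- the per-outcome bound
  have hbound : ∀ x, (if 0 < p x then dotProduct (a x) (c x) / p x else 0)
      ≤ (M x).trace.re - p x := by
    intro x
    by_cases hx : 0 < p x
    · rw [if_pos hx]
      have hss : (hM x).sqrt * (hM x).sqrt = M x := (hM x).sqrt_mul_self
      have hcomm : (hM x).sqrt * M x = M x * (hM x).sqrt := by
        calc (hM x).sqrt * M x = (hM x).sqrt * ((hM x).sqrt * (hM x).sqrt) := by rw [hss]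
          _ = ((hM x).sqrt * (hM x).sqrt) * (hM x).sqrt := (Matrix.mul_assoc _ _ _).symm
          _ = M x * (hM x).sqrt := by rw [hss]
      set S : Matrix (Fin d) (Fin d) ℂ := ∑ i, ((c x i : ℝ) : ℂ) • L i with hS
      set B : Matrix (Fin d) (Fin d) ℂ := M x - S - ((p x : ℝ) : ℂ) • 1 with hB
      have hSh : Sᴴ = S := by
        rw [hS, Matrix.conjTranspose_sum]
        apply Finset.sum_congr rfl
        intro i _
        rw [Matrix.conjTranspose_smul, (hLh i).eq]
        simp
      have hBh : Bᴴ = B := by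
        rw [hB, Matrix.conjTranspose_sub, Matrix.conjTranspose_sub, (hM x).1.eq, hSh,
          Matrix.conjTranspose_smul, Matrix.conjTranspose_one]
        simp
      have hT : 0 ≤ (B * ρ * B).trace.re := by
        have hpsd := hρ.mul_mul_conjTranspose_same B
        rw [hBh] at hpsd
        exact psd_trace_re_nonneg hpsd
      have e1 : (B * ρ * B).trace = (M x * ρ * M x).trace - (M x * ρ * S).trace
          - ((p x : ℂ)) * (M x * ρ).trace - (S * ρ * M x).trace + (S * ρ * S).trace
          + ((p x : ℂ)) * (S * ρ).trace - ((p x : ℂ)) * (ρ * M x).trace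
          + ((p x : ℂ)) * (ρ * S).trace + ((p x : ℂ)) * ((p x : ℂ)) * ρ.trace := by
        rw [hB]
        simp only [Matrix.sub_mul, Matrix.mul_sub, Matrix.smul_mul, Matrix.mul_smul,
          Matrix.one_mul, Matrix.mul_one, Matrix.trace_sub, Matrix.trace_smul, smul_smul,
          smul_eq_mul]
        ring
      have r1 : (M x * ρ * S).trace.re = dotProduct (a x) (c x) := by
        rw [hS, Matrix.mul_sum]
        simp only [Matrix.mul_smul, Matrix.trace_sum, Matrix.trace_smul, smul_eq_mul]
        rw [Complex.re_sum, dotProduct]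
        apply Finset.sum_congr rfl
        intro i _
        rw [Complex.re_ofReal_mul, haL]
        ring
      have r2 : (S * ρ * M x).trace.re = dotProduct (a x) (c x) := by
        rw [hS, Matrix.sum_mul, Matrix.sum_mul]
        simp only [Matrix.smul_mul, Matrix.trace_sum, Matrix.trace_smul, smul_eq_mul]
        rw [Complex.re_sum, dotProduct]
        apply Finset.sum_congr rfl
        intro i _
        rw [Complex.re_ofReal_mul, haL']
        ring
      have hJc : J *ᵥ c x = a x := by
        rw [hc]
        dsimp only
        rw [Matrix.mulVec_mulVec, Matrix.mul_nonsing_inv _ hJu, Matrix.one_mulVec]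
      have r3 : (S * ρ * S).trace.re = dotProduct (a x) (c x) := by
        have : (S * ρ * S).trace.re = ∑ i, ∑ j, c x i * c x j * J i j := by
          rw [hS, Matrix.sum_mul, Matrix.sum_mul]
          simp only [Matrix.mul_sum, Matrix.smul_mul, Matrix.mul_smul, Matrix.trace_sum,
            Matrix.trace_smul, smul_eq_mul, Complex.re_sum]
          apply Finset.sum_congr rfl
          intro i _
          apply Finset.sum_congr rfl
          intro j _
          rw [show ((c x j : ℝ) : ℂ) * (((c x i : ℝ) : ℂ) * (L i * ρ * L j).trace)
              = (((c x i * c x j : ℝ)) : ℂ) * (L i * ρ * L j).trace by push_cast; ring]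
          rw [Complex.re_ofReal_mul, hJ']
        rw [this]
        calc ∑ i, ∑ j, c x i * c x j * J i j = dotProduct (c x) (J *ᵥ c x) := by
              rw [dotProduct]
              apply Finset.sum_congr rfl
              intro i _
              rw [Matrix.mulVec, dotProduct, Finset.mul_sum]
              apply Finset.sum_congr rfl
              intro j _
              ring
          _ = dotProduct (a x) (c x) := by rw [hJc, dotProduct_comm]
      have r4 : (M x * ρ).trace.re = p x := by
        rw [Matrix.trace_mul_comm, hp]
      have r6 : (S * ρ).trace = 0 := by
        rw [hS, Matrix.sum_mul]
        simp only [Matrix.smul_mul, Matrix.trace_sum, Matrix.trace_smul, smul_eq_mul]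
        apply Finset.sum_eq_zero
        intro i _
        rw [Matrix.trace_mul_comm, hLtr i, mul_zero]
      have r7 : (ρ * S).trace = 0 := by
        rw [hS, Matrix.mul_sum]
        simp only [Matrix.mul_smul, Matrix.trace_sum, Matrix.trace_smul, smul_eq_mul]
        apply Finset.sum_eq_zero
        intro i _
        rw [hLtr i, mul_zero]
      have hexp : (B * ρ * B).trace.re
          = (M x * ρ * M x).trace.re - dotProduct (a x) (c x) - p x * p x := by
        rw [e1, r6, r7, hρtr]
        simp only [mul_zero, add_zero, mul_one]
        simp only [Complex.sub_re, Complex.add_re, Complex.re_ofReal_mul, Complex.ofReal_re]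
        rw [r1, r2, r3, r4]
        have h9 : (ρ * M x).trace.re = p x := rfl
        rw [h9]
        ring
      have hA' := hρ.conjTranspose_mul_mul_same (hM x).sqrt
      have e : (M x * ρ * M x).trace = (((hM x).sqrtᴴ * ρ * (hM x).sqrt) * M x).trace := by
        rw [(hM x).posSemidef_sqrt.1.eq]
        have h5 : (hM x).sqrt * (M x * (hM x).sqrt) = M x * M x := by
          rw [← Matrix.mul_assoc, hcomm, Matrix.mul_assoc, hss]
        calc (M x * ρ * M x).trace = (M x * (M x * ρ)).trace := by
              rw [Matrix.trace_mul_comm]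
          _ = ((M x * M x) * ρ).trace := by rw [← Matrix.mul_assoc]
          _ = (((hM x).sqrt * (M x * (hM x).sqrt)) * ρ).trace := by rw [h5]
          _ = ((M x * (hM x).sqrt) * ρ * (hM x).sqrt).trace := by
              rw [Matrix.trace_mul_comm, ← Matrix.mul_assoc, Matrix.trace_mul_comm,
                ← Matrix.mul_assoc]
          _ = (M x * ((hM x).sqrt * ρ * (hM x).sqrt)).trace := by
              rw [Matrix.mul_assoc, Matrix.mul_assoc, Matrix.mul_assoc]
          _ = (((hM x).sqrt * ρ * (hM x).sqrt) * M x).trace := by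
              rw [Matrix.trace_mul_comm]
      have htrA' : ((hM x).sqrtᴴ * ρ * (hM x).sqrt).trace = (ρ * M x).trace :=
        (trace_conj_sqrt (hM x)).symm
      have hφ : (M x * ρ * M x).trace.re ≤ p x * (M x).trace.re := by
        have hb := psd_trace_mul_le hA' (hM x)
        rw [htrA'] at hb
        rw [e]
        exact hb
      have hfin : dotProduct (a x) (c x) ≤ p x * (M x).trace.re - p x * p x := by
        have h11 := hT
        rw [hexp] at h11
        linarith [hφ]
      rw [div_le_iff₀ hx]
      have h12 : ((M x).trace.re - p x) * p x = p x * (M x).trace.re - p x * p x := by ring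
      rw [h12]
      exact hfin
    · rw [if_neg hx]
      have h1 : p x ≤ 0 := le_of_not_gt hx
      have h2 : 0 ≤ (M x).trace.re := psd_trace_re_nonneg (hM x)
      linarith
  -- summing up
  have hsum : ∑ x, ((M x).trace.re - p x) = (d : ℝ) - 1 := by
    rw [Finset.sum_sub_distrib]
    have h1 : ∑ x, (M x).trace.re = (d : ℝ) := by
      have : ∑ x, (M x).trace = (d : ℂ) := by
        rw [← Matrix.trace_sum, hMsum, Matrix.trace_one]
        simp
      calc ∑ x, (M x).trace.re = (∑ x, (M x).trace).re := by rw [Complex.re_sum]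
        _ = ((d : ℂ)).re := by rw [this]
        _ = (d : ℝ) := by simp
    have h2 : ∑ x, p x = 1 := by
      have : ∑ x, (ρ * M x).trace = (1 : ℂ) := by
        rw [← Matrix.trace_sum, ← Finset.mul_sum, hMsum, Matrix.mul_one, hρtr]
      calc ∑ x, p x = (∑ x, (ρ * M x).trace).re := by rw [Complex.re_sum]
        _ = (1 : ℝ) := by rw [this]; simp
    rw [h1, h2]
  calc (J⁻¹ * I).trace = ∑ x, (if 0 < p x then dotProduct (a x) (c x) / p x else 0) := htrace
    _ ≤ ∑ x, ((M x).trace.re - p x) := Finset.sum_le_sum fun x _ => hbound x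
    _ = (d : ℝ) - 1 := hsum
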